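/- arXiv:1808.09378 — 3 statements merged into one kernel-verified Lean document; each statement's English description precedes it below -/
import Mathlib

section
/- Let π be a partition of [s,t] with m ≥ 2 subintervals and let ω be a control function. Then there exists an interior point u of π, with adjacent partition points u− < u < u', such that ω(u−, u') ≤ (2/(m−1)) · ω(s,t). -/
/-- A control function on the simplex `{0 ≤ s ≤ t ≤ T}`. -/
def IsControl (T : ℝ) (ω : ℝ → ℝ → ℝ) : Prop :=
  ContinuousOn (fun p : ℝ × ℝ => ω p.1 p.2) {p : ℝ × ℝ | 0 ≤ p.1 ∧ p.1 ≤ p.2 ∧ p.2 ≤ T}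
    ∧ (∀ s t, 0 ≤ s → s ≤ t → t ≤ T → 0 ≤ ω s t)
    ∧ (∀ s, 0 ≤ s → s ≤ T → ω s s = 0)
    ∧ (∀ s1 t1 s2 t2, 0 ≤ s2 → s2 ≤ s1 → s1 ≤ t1 → t1 ≤ t2 → t2 ≤ T → ω s1 t1 ≤ ω s2 t2)
    ∧ (∀ s u t, 0 ≤ s → s ≤ u → u ≤ t → t ≤ T → ω s u + ω u t ≤ ω s t)

lemma chain_sum {T : ℝ} {ω : ℝ → ℝ → ℝ} (hω : IsControl T ω) (b : ℕ → ℝ)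
    (h0 : 0 ≤ b 0) :
    ∀ n, b n ≤ T → (∀ j, j < n → b j ≤ b (j + 1)) →
      ∑ j ∈ Finset.range n, ω (b j) (b (j + 1)) ≤ ω (b 0) (b n) := by
  obtain ⟨_, hnn, _, _, hsup⟩ := hω
  intro n
  induction n with
  | zero =>
    intro hT _
    simpa using hnn _ _ h0 le_rfl hT
  | succ n ih =>
    intro hT hmono
    have hle : ∀ j, j ≤ n + 1 → b 0 ≤ b j := by
      intro j hj
      induction j with
      | zero => exact le_rfl
      | succ k ihk => exact le_trans (ihk (by omega)) (hmono k (by omega))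
    have h1 := ih (le_trans (hmono n (by omega)) hT) (fun j hj => hmono j (by omega))
    have h2 := hsup (b 0) (b n) (b (n + 1)) h0 (hle n (by omega)) (hmono n (by omega)) hT
    rw [Finset.sum_range_succ]
    linarith

/-- Given a partition `s = pts 0 < ... < pts m = t` with `m ≥ 2` subintervals and a
control function `ω`, there exists an interior point `pts i` whose adjacent points
satisfy `ω(pts (i-1), pts (i+1)) ≤ 2/(m-1) · ω(s,t)`. -/
theorem exists_small_interior_point (T : ℝ) (ω : ℝ → ℝ → ℝ) (hω : IsControl T ω)
    (s t : ℝ) (hs : 0 ≤ s) (ht : t ≤ T) (m : ℕ) (hm : 2 ≤ m) (pts : ℕ → ℝ)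
    (hfirst : pts 0 = s) (hlast : pts m = t)
    (hstrict : ∀ i, i < m → pts i < pts (i + 1)) :
    ∃ i, 1 ≤ i ∧ i < m ∧
      ω (pts (i - 1)) (pts (i + 1)) ≤ 2 / ((m : ℝ) - 1) * ω s t := by
  by_contra hcon
  push_neg at hcon
  obtain ⟨_, hnn, _, hmono, hsup⟩ := hω
  set c : ℝ := 2 / ((m : ℝ) - 1) * ω s t with hc
  -- monotonicity of pts
  have step : ∀ i j, i ≤ j → j ≤ m → pts i ≤ pts j := by
    intro i j hij hjm
    induction j with
    | zero =>
      have : i = 0 := by omega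
      simp [this]
    | succ k ihk =>
      rcases Nat.lt_or_ge i (k + 1) with hlt | hge
      · exact le_trans (ihk (by omega) (by omega)) (le_of_lt (hstrict k (by omega)))
      · have : i = k + 1 := by omega
        simp [this]
  have hpos : ∀ i, i ≤ m → 0 ≤ pts i := by
    intro i hi
    calc (0:ℝ) ≤ s := hs
    _ = pts 0 := hfirst.symm
    _ ≤ pts i := step 0 i (Nat.zero_le _) hi
  have hTb : ∀ i, i ≤ m → pts i ≤ T := by
    intro i hi
    calc pts i ≤ pts m := step i m hi le_rfl
    _ = t := hlast
    _ ≤ T := ht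
  set k1 := m / 2 with hk1
  set k2 := (m - 1) / 2 with hk2
  have hk12 : k1 + k2 = m - 1 := by omega
  -- odd windows
  have hodd : ∑ j ∈ Finset.range k1, ω (pts (2 * j)) (pts (2 * (j + 1))) ≤ ω s t := by
    have h1 := chain_sum (ω := ω) ⟨by assumption, hnn, by assumption, hmono, hsup⟩
      (fun j => pts (2 * j)) (by simpa [hfirst] using hs) k1
      (hTb (2 * k1) (by omega)) (fun j hj => step (2 * j) (2 * (j + 1)) (by omega) (by omega))
    refine le_trans h1 ?_
    have := hmono (pts 0) (pts (2 * k1)) s t hs (le_of_eq hfirst.symm)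
      (step 0 (2 * k1) (by omega) (by omega))
      (by rw [← hlast]; exact step (2 * k1) m (by omega) le_rfl) ht
    simpa using this
  -- even windows
  have heven : ∑ j ∈ Finset.range k2, ω (pts (2 * j + 1)) (pts (2 * (j + 1) + 1)) ≤ ω s t := by
    have h1 := chain_sum (ω := ω) ⟨by assumption, hnn, by assumption, hmono, hsup⟩
      (fun j => pts (2 * j + 1)) (by simpa using hpos 1 (by omega)) k2
      (hTb (2 * k2 + 1) (by omega))
      (fun j hj => step (2 * j + 1) (2 * (j + 1) + 1) (by omega) (by omega))
    refine le_trans h1 ?_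
    have := hmono (pts 1) (pts (2 * k2 + 1)) s t hs
      (by rw [← hfirst]; exact step 0 1 (by omega) (by omega))
      (step 1 (2 * k2 + 1) (by omega) (by omega))
      (by rw [← hlast]; exact step (2 * k2 + 1) m (by omega) le_rfl) ht
    simpa using this
  -- strict lower bounds
  have hb1 : ∀ j ∈ Finset.range k1, c < ω (pts (2 * j)) (pts (2 * (j + 1))) := by
    intro j hj
    simp only [Finset.mem_range] at hj
    have h := hcon (2 * j + 1) (by omega) (by omega)
    have e1 : 2 * j + 1 - 1 = 2 * j := by omega
    have e2 : 2 * j + 1 + 1 = 2 * (j + 1) := by omega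
    rwa [e1, e2] at h
  have hb2 : ∀ j ∈ Finset.range k2, c ≤ ω (pts (2 * j + 1)) (pts (2 * (j + 1) + 1)) := by
    intro j hj
    simp only [Finset.mem_range] at hj
    have h := hcon (2 * j + 2) (by omega) (by omega)
    have e1 : 2 * j + 2 - 1 = 2 * j + 1 := by omega
    have e2 : 2 * j + 2 + 1 = 2 * (j + 1) + 1 := by omega
    rw [e1, e2] at h
    exact le_of_lt h
  have hlt1 : (k1 : ℝ) * c < ∑ j ∈ Finset.range k1, ω (pts (2 * j)) (pts (2 * (j + 1))) := by
    have hne : (Finset.range k1).Nonempty := Finset.nonempty_range_iff.mpr (by omega)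
    have := Finset.sum_lt_sum_of_nonempty hne hb1
    simpa [Finset.sum_const, nsmul_eq_mul] using this
  have hle2 : (k2 : ℝ) * c ≤ ∑ j ∈ Finset.range k2, ω (pts (2 * j + 1)) (pts (2 * (j + 1) + 1)) := by
    have := Finset.sum_le_sum hb2
    simpa [Finset.sum_const, nsmul_eq_mul] using this
  have hcast : (k1 : ℝ) + (k2 : ℝ) = (m : ℝ) - 1 := by
    have h : (k1 : ℝ) + (k2 : ℝ) = ((m - 1 : ℕ) : ℝ) := by exact_mod_cast hk12
    rw [Nat.cast_sub (by omega : 1 ≤ m)] at h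
    simpa using h
  have hm1 : (m : ℝ) - 1 ≠ 0 := by
    have : (2 : ℝ) ≤ (m : ℝ) := by exact_mod_cast hm
    linarith
  have hceq : ((m : ℝ) - 1) * c = 2 * ω s t := by
    rw [hc]
    field_simp
  have : ((m : ℝ) - 1) * c < 2 * ω s t := by
    calc ((m : ℝ) - 1) * c = (k1 : ℝ) * c + (k2 : ℝ) * c := by rw [← hcast]; ring
    _ < _ + _ := by exact add_lt_add_of_lt_of_le hlt1 hle2
    _ ≤ ω s t + ω s t := add_le_add hodd heven
    _ = 2 * ω s t := by ring
  linarith [hceq]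
end

section
/- Let X: [0,T] → B be continuous of finite p-variation and H: [0,T] → Hom(B,V) continuous of finite q-variation with 1/p + 1/q > 1. Then the Riemann sums with adapted evaluation Σ_{u∈π} H_u X_{u,u'} and with terminal evaluation Σ_{u∈π} H_{u'} X_{u,u'} converge to the same limit as the partition meshsize |π| → 0; that is, Σ_{u∈π} |H_u X_{u,u'} − H_{u'} X_{u,u'}| → 0 as |π| → 0. -/
/-- A partition of `[s,t]`: points `pts 0 = s < pts 1 < ... < pts n = t`. -/
structure RealPartition (s t : ℝ) where
  n : ℕ
  npos : 0 < n
  pts : ℕ → ℝ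
  first : pts 0 = s
  last : pts n = t
  strict : ∀ i, i < n → pts i < pts (i + 1)

/-- The meshsize of a partition. -/
noncomputable def RealPartition.mesh {s t : ℝ} (π : RealPartition s t) : ℝ :=
  (Finset.range π.n).sup'
    (Finset.nonempty_range_iff.mpr π.npos.ne')
    fun i => π.pts (i + 1) - π.pts i


private lemma RealPartition.pts_le {s t : ℝ} (π : RealPartition s t) (i j : ℕ) (hij : i ≤ j)
    (hj : j ≤ π.n) : π.pts i ≤ π.pts j := by
  induction j with
  | zero => simp_all
  | succ m ih =>
    rcases Nat.lt_or_ge i (m + 1) with h | h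
    · exact (ih (Nat.lt_succ_iff.mp h) (le_trans (Nat.le_succ m) hj)).trans
        (π.strict m (by omega)).le
    · have : i = m + 1 := le_antisymm hij h
      simp [this]

private lemma control_sum_le (T : ℝ) (hT : 0 ≤ T) (ω : ℝ → ℝ → ℝ) (hω : IsControl T ω)
    (π : RealPartition 0 T) (m : ℕ) (hm : m ≤ π.n) :
    ∑ i ∈ Finset.range m, ω (π.pts i) (π.pts (i + 1)) ≤ ω 0 (π.pts m) := by
  obtain ⟨-, nn, diag, -, sup⟩ := hω
  induction m with
  | zero => simp [π.first, diag 0 le_rfl hT]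
  | succ m ih =>
    have h0 : π.pts 0 = 0 := π.first
    have h1 : (0:ℝ) ≤ π.pts m := by
      have := π.pts_le 0 m (Nat.zero_le _) (by omega); rw [h0] at this; exact this
    have h2 : π.pts m ≤ π.pts (m + 1) := (π.strict m (by omega)).le
    have h3 : π.pts (m + 1) ≤ T := by
      have := π.pts_le (m + 1) π.n hm le_rfl; rw [π.last] at this; exact this
    rw [Finset.sum_range_succ]
    calc ∑ i ∈ Finset.range m, ω (π.pts i) (π.pts (i + 1)) + ω (π.pts m) (π.pts (m + 1))
        ≤ ω 0 (π.pts m) + ω (π.pts m) (π.pts (m + 1)) :=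
          add_le_add (ih (by omega)) le_rfl
      _ ≤ ω 0 (π.pts (m + 1)) := sup 0 (π.pts m) (π.pts (m + 1)) le_rfl h1 h2 h3

/-- For `X` continuous of finite `p`-variation and `H` continuous of finite
`q`-variation, `1/p + 1/q > 1`, Riemann sums with adapted and with terminal evaluation
converge to the same limit: `Σ_{u∈π} ‖H_u X_{u,u'} − H_{u'} X_{u,u'}‖ → 0` as
`|π| → 0`. -/
theorem adapted_eq_terminal_evaluation {B V : Type*}
    [NormedAddCommGroup B] [NormedSpace ℝ B] [NormedAddCommGroup V] [NormedSpace ℝ V]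
    (T p q : ℝ) (hT : 0 < T) (hp : 1 ≤ p) (hq : 1 ≤ q) (hpq : 1 / p + 1 / q > 1)
    (X : ℝ → B) (H : ℝ → B →L[ℝ] V) (ωX ωH : ℝ → ℝ → ℝ)
    (hωX : IsControl T ωX) (hωH : IsControl T ωH)
    (hXc : ContinuousOn X (Set.Icc 0 T)) (hHc : ContinuousOn H (Set.Icc 0 T))
    (hXvar : ∀ s t, 0 ≤ s → s ≤ t → t ≤ T → ‖X t - X s‖ ≤ ωX s t ^ (1 / p))
    (hHvar : ∀ s t, 0 ≤ s → s ≤ t → t ≤ T → ‖H t - H s‖ ≤ ωH s t ^ (1 / q)) :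
    ∀ ε > 0, ∃ δ > 0, ∀ π : RealPartition 0 T, π.mesh < δ →
      (∑ i ∈ Finset.range π.n,
          ‖(H (π.pts i) - H (π.pts (i + 1))) (X (π.pts (i + 1)) - X (π.pts i))‖) < ε := by
  intro ε hε
  obtain ⟨cX, nnX, diagX, monoX, supX⟩ := hωX
  obtain ⟨cH, nnH, diagH, monoH, supH⟩ := hωH
  have hp0 : 0 < p := lt_of_lt_of_le one_pos hp
  have hq0 : 0 < q := lt_of_lt_of_le one_pos hq
  have hMX : 0 ≤ ωX 0 T := nnX 0 T le_rfl hT.le le_rfl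
  have hMH : 0 ≤ ωH 0 T := nnH 0 T le_rfl hT.le le_rfl
  set M : ℝ := ωX 0 T + ωH 0 T + 1 with hMdef
  have hM0 : 0 < M := by positivity
  set r : ℝ := 1 / p + 1 / q - 1 with hrdef
  have hr : 0 < r := by simp only [hrdef]; linarith
  set η : ℝ := (ε / M) ^ r⁻¹ with hηdef
  have hη : 0 < η := Real.rpow_pos_of_pos (div_pos hε hM0) _
  have hηr : η ^ r = ε / M := Real.rpow_inv_rpow (div_pos hε hM0).le hr.ne'
  -- uniform continuity of ωX + ωH on the compact simplex
  set K : Set (ℝ × ℝ) := {p : ℝ × ℝ | 0 ≤ p.1 ∧ p.1 ≤ p.2 ∧ p.2 ≤ T} with hKdef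
  have hKc : IsCompact K := by
    apply IsCompact.of_isClosed_subset ((isCompact_Icc (a := (0:ℝ)) (b := T)).prod isCompact_Icc)
    · exact (isClosed_le continuous_const continuous_fst).inter
        ((isClosed_le continuous_fst continuous_snd).inter
          (isClosed_le continuous_snd continuous_const))
    · rintro ⟨a, b⟩ ⟨h1, h2, h3⟩
      exact ⟨⟨h1, h2.trans h3⟩, ⟨h1.trans h2, h3⟩⟩
  have hfc : ContinuousOn (fun pp : ℝ × ℝ => ωX pp.1 pp.2 + ωH pp.1 pp.2) K := cX.add cH
  have huc := Metric.uniformContinuousOn_iff.mp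
    (hKc.uniformContinuousOn_of_continuous hfc) η hη
  obtain ⟨δ, hδ, hδP⟩ := huc
  refine ⟨δ, hδ, fun π hmesh => ?_⟩
  -- basic facts about the partition points
  have hpt0 : ∀ i ≤ π.n, (0:ℝ) ≤ π.pts i := fun i hi => by
    have := π.pts_le 0 i (Nat.zero_le _) hi; rw [π.first] at this; exact this
  have hptT : ∀ i ≤ π.n, π.pts i ≤ T := fun i hi => by
    have := π.pts_le i π.n hi le_rfl; rw [π.last] at this; exact this
  -- per-term bound
  have key : ∀ i ∈ Finset.range π.n,
      ‖(H (π.pts i) - H (π.pts (i + 1))) (X (π.pts (i + 1)) - X (π.pts i))‖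
        ≤ η ^ r * (ωX (π.pts i) (π.pts (i + 1)) + ωH (π.pts i) (π.pts (i + 1))) := by
    intro i hi
    rw [Finset.mem_range] at hi
    set s := π.pts i with hs
    set t := π.pts (i + 1) with ht
    have h0s : (0:ℝ) ≤ s := hpt0 i hi.le
    have hst : s ≤ t := (π.strict i hi).le
    have htT : t ≤ T := hptT (i + 1) hi
    have hsT : s ≤ T := hst.trans htT
    set c : ℝ := ωX s t + ωH s t with hcdef
    have hcX : 0 ≤ ωX s t := nnX s t h0s hst htT
    have hcH : 0 ≤ ωH s t := nnH s t h0s hst htT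
    have hc0 : 0 ≤ c := by positivity
    -- smallness of c from uniform continuity
    have hcη : c < η := by
      have hmem1 : ((s, t) : ℝ × ℝ) ∈ K := ⟨h0s, hst, htT⟩
      have hmem2 : ((s, s) : ℝ × ℝ) ∈ K := ⟨h0s, le_rfl, hsT⟩
      have hdist : dist ((s, t) : ℝ × ℝ) ((s, s) : ℝ × ℝ) < δ := by
        rw [Prod.dist_eq]
        simp only [dist_self, Real.dist_eq]
        have hts : t - s ≤ π.mesh := by
          have := Finset.le_sup' (fun j => π.pts (j + 1) - π.pts j)
            (Finset.mem_range.mpr hi)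
          exact this
        have : |t - s| = t - s := abs_of_nonneg (by linarith)
        rw [sup_lt_iff]
        constructor
        · exact hδ
        · rw [this]; linarith [hmesh]
      have := hδP _ hmem1 _ hmem2 hdist
      simp only [diagX s h0s hsT, diagH s h0s hsT, add_zero, Real.dist_eq] at this
      calc c = ωX s t + ωH s t - 0 := by ring
        _ ≤ |ωX s t + ωH s t - 0| := le_abs_self _
        _ < η := by simpa using this
    -- bound the term
    have hb1 : ‖(H s - H t) (X t - X s)‖ ≤ ‖H s - H t‖ * ‖X t - X s‖ :=
      (H s - H t).le_opNorm _
    have hb2 : ‖H s - H t‖ ≤ ωH s t ^ (1 / q) := by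
      rw [norm_sub_rev]; exact hHvar s t h0s hst htT
    have hb3 : ‖X t - X s‖ ≤ ωX s t ^ (1 / p) := hXvar s t h0s hst htT
    have hb4 : ωH s t ^ (1 / q) ≤ c ^ (1 / q) :=
      Real.rpow_le_rpow hcH (by simp only [hcdef]; linarith) (by positivity)
    have hb5 : ωX s t ^ (1 / p) ≤ c ^ (1 / p) :=
      Real.rpow_le_rpow hcX (by simp only [hcdef]; linarith) (by positivity)
    have hb6 : c ^ (1 / q) * c ^ (1 / p) = c ^ r * c := by
      rw [← Real.rpow_add' hc0 (by positivity)]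
      have : c ^ r * c = c ^ r * c ^ (1:ℝ) := by rw [Real.rpow_one]
      rw [this, ← Real.rpow_add' hc0 (by simp only [hrdef]; intro h; linarith [hr])]
      ring_nf
      congr 1; rw [hrdef]; ring
    have hb7 : c ^ r ≤ η ^ r := Real.rpow_le_rpow hc0 hcη.le hr.le
    calc ‖(H s - H t) (X t - X s)‖ ≤ ‖H s - H t‖ * ‖X t - X s‖ := hb1
      _ ≤ c ^ (1 / q) * c ^ (1 / p) := by
          apply mul_le_mul (hb2.trans hb4) (hb3.trans hb5) (norm_nonneg _)
          positivity
      _ = c ^ r * c := hb6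
      _ ≤ η ^ r * c := mul_le_mul_of_nonneg_right hb7 hc0
  -- sum it up
  have hsum : (∑ i ∈ Finset.range π.n,
      ‖(H (π.pts i) - H (π.pts (i + 1))) (X (π.pts (i + 1)) - X (π.pts i))‖)
        ≤ η ^ r * (ωX 0 T + ωH 0 T) := by
    calc (∑ i ∈ Finset.range π.n,
        ‖(H (π.pts i) - H (π.pts (i + 1))) (X (π.pts (i + 1)) - X (π.pts i))‖)
        ≤ ∑ i ∈ Finset.range π.n,
            η ^ r * (ωX (π.pts i) (π.pts (i + 1)) + ωH (π.pts i) (π.pts (i + 1))) :=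
          Finset.sum_le_sum key
      _ = η ^ r * (∑ i ∈ Finset.range π.n, ωX (π.pts i) (π.pts (i + 1))
            + ∑ i ∈ Finset.range π.n, ωH (π.pts i) (π.pts (i + 1))) := by
          rw [← Finset.mul_sum, Finset.sum_add_distrib]
      _ ≤ η ^ r * (ωX 0 T + ωH 0 T) := by
          apply mul_le_mul_of_nonneg_left _ (by positivity)
          have e1 := control_sum_le T hT.le ωX ⟨cX, nnX, diagX, monoX, supX⟩ π π.n le_rfl
          have e2 := control_sum_le T hT.le ωH ⟨cH, nnH, diagH, monoH, supH⟩ π π.n le_rfl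
          rw [π.last] at e1 e2
          linarith
  have : η ^ r * (ωX 0 T + ωH 0 T) < η ^ r * M := by
    apply mul_lt_mul_of_pos_left _ (by rw [hηr]; exact div_pos hε hM0)
    simp only [hMdef]; linarith
  calc (∑ i ∈ Finset.range π.n,
      ‖(H (π.pts i) - H (π.pts (i + 1))) (X (π.pts (i + 1)) - X (π.pts i))‖)
      ≤ η ^ r * (ωX 0 T + ωH 0 T) := hsum
    _ < η ^ r * M := this
    _ = ε := by rw [hηr]; field_simp
end

section
/- (Pathwise analogue of RY Exercise IV.2.21.) Let X: [0,T] → ℝ be such that for every continuous H: [0,T] → ℝ the limit of Riemann sums lim_n Σ_{u∈π_n} H_u (X_{u'} − X_u) exists in ℝ along every sequence (π_n) of partitions of [0,T] with meshsize tending to zero. Then the limit does not depend on the particular sequence of partitions, and X is of bounded variation on [0,T]. -/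
set_option maxHeartbeats 1000000
set_option synthInstance.maxHeartbeats 1000000


/-- The Riemann sum `Σ_{u∈π} H_u (X_{u'} − X_u)`. -/
def riemannSum {s t : ℝ} (H X : ℝ → ℝ) (π : RealPartition s t) : ℝ :=
  ∑ i ∈ Finset.range π.n, H (π.pts i) * (X (π.pts (i + 1)) - X (π.pts i))

namespace RealPartition
variable {s t : ℝ} (π : RealPartition s t)

lemma pts_lt_pts {i j : ℕ} (hij : i < j) (hj : j ≤ π.n) : π.pts i < π.pts j := by
  induction j with
  | zero => omega
  | succ m ih =>
    rcases Nat.lt_succ_iff_lt_or_eq.mp hij with h | h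
    · exact (ih h (by omega)).trans (π.strict m (by omega))
    · exact h ▸ π.strict m (by omega)

lemma pts_le_pts {i j : ℕ} (hij : i ≤ j) (hj : j ≤ π.n) : π.pts i ≤ π.pts j := by
  rcases eq_or_lt_of_le hij with h | h
  · exact h ▸ le_rfl
  · exact (π.pts_lt_pts h hj).le

lemma pts_mem {i : ℕ} (hi : i ≤ π.n) : π.pts i ∈ Set.Icc s t := by
  have h1 := π.pts_le_pts (Nat.zero_le i) hi
  have h2 := π.pts_le_pts hi le_rfl
  rw [π.first] at h1; rw [π.last] at h2
  exact ⟨h1, h2⟩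

lemma gap_le_mesh {i : ℕ} (hi : i < π.n) : π.pts (i + 1) - π.pts i ≤ π.mesh := by
  unfold RealPartition.mesh
  exact Finset.le_sup' (fun i => π.pts (i + 1) - π.pts i) (Finset.mem_range.mpr hi)

lemma mesh_pos : 0 < π.mesh :=
  lt_of_lt_of_le (sub_pos.mpr (π.strict 0 π.npos)) (π.gap_le_mesh π.npos)

lemma mesh_le {δ : ℝ} (h : ∀ i < π.n, π.pts (i + 1) - π.pts i ≤ δ) : π.mesh ≤ δ := by
  unfold RealPartition.mesh
  exact Finset.sup'_le _ _ fun i hi => h i (Finset.mem_range.mp hi)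

/-- The points of the uniform `k`-fold refinement. -/
noncomputable def rpts (k : ℕ) : ℕ → ℝ := fun j =>
  π.pts (j / k) + ((j % k : ℕ) : ℝ) * (π.pts (j / k + 1) - π.pts (j / k)) / ((k : ℕ) : ℝ)

lemma rpts_block (k : ℕ) (hk : 0 < k) (q : ℕ) : π.rpts k (q * k) = π.pts q := by
  unfold rpts
  rw [Nat.mul_div_cancel _ hk, Nat.mul_mod_left]
  simp

lemma rpts_gap (k : ℕ) (hk : 0 < k) (j : ℕ) :
    π.rpts k (j + 1) - π.rpts k j = (π.pts (j / k + 1) - π.pts (j / k)) / k := by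
  have hk' : (k : ℝ) ≠ 0 := Nat.cast_ne_zero.mpr hk.ne'
  set q := j / k with hq
  set r := j % k with hr
  have hrk : r < k := Nat.mod_lt _ hk
  have hqr : k * q + r = j := Nat.div_add_mod j k
  by_cases hc : r + 1 < k
  · have hj1 : j + 1 = k * q + (r + 1) := by omega
    have hd : (j + 1) / k = q := by
      rw [hj1, Nat.mul_add_div hk, Nat.div_eq_of_lt hc, add_zero]
    have hm : (j + 1) % k = r + 1 := by
      rw [hj1, Nat.mul_add_mod, Nat.mod_eq_of_lt hc]
    unfold rpts
    rw [hd, hm, ← hq, ← hr]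
    push_cast
    ring
  · have hrk1 : r + 1 = k := by omega
    have hj1 : j + 1 = k * (q + 1) := by
      have : k * (q + 1) = k * q + k := by ring
      omega
    have hd : (j + 1) / k = q + 1 := by rw [hj1, Nat.mul_div_cancel_left _ hk]
    have hm : (j + 1) % k = 0 := by rw [hj1, Nat.mul_mod_right]
    unfold rpts
    rw [hd, hm, ← hq, ← hr]
    have hrr : (r : ℝ) = (k : ℝ) - 1 := by
      have : ((r : ℕ) : ℝ) + 1 = k := by exact_mod_cast congrArg (Nat.cast : ℕ → ℝ) hrk1
      linarith
    rw [hrr]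
    field_simp
    ring

/-- The uniform `k`-fold refinement of a partition. -/
noncomputable def refine (k : ℕ) (hk : 0 < k) : RealPartition s t where
  n := π.n * k
  npos := Nat.mul_pos π.npos hk
  pts := π.rpts k
  first := by
    have := π.rpts_block k hk 0
    simpa [π.first] using this
  last := by
    have := π.rpts_block k hk π.n
    simpa [π.last] using this
  strict := by
    intro j hj
    have hq : j / k < π.n :=
      Nat.div_lt_of_lt_mul (Nat.lt_of_lt_of_eq hj (Nat.mul_comm _ _))
    have := π.rpts_gap k hk j
    have hgap : 0 < π.pts (j / k + 1) - π.pts (j / k) := sub_pos.mpr (π.strict _ hq)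
    have : 0 < π.rpts k (j + 1) - π.rpts k j := by
      rw [this]; positivity
    linarith

lemma refine_mesh (k : ℕ) (hk : 0 < k) {δ : ℝ} (hδ : 0 < δ)
    (hkδ : π.mesh / δ ≤ (k : ℝ)) : (π.refine k hk).mesh ≤ δ := by
  apply mesh_le
  intro j hj
  have hj' : j < π.n * k := hj
  have hq : j / k < π.n :=
    Nat.div_lt_of_lt_mul (Nat.lt_of_lt_of_eq hj' (Nat.mul_comm _ _))
  have h1 : (π.refine k hk).pts (j + 1) - (π.refine k hk).pts j
      = (π.pts (j / k + 1) - π.pts (j / k)) / k := π.rpts_gap k hk j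
  rw [h1]
  have h2 : π.pts (j / k + 1) - π.pts (j / k) ≤ π.mesh := π.gap_le_mesh hq
  have hk0 : (0 : ℝ) < k := by exact_mod_cast hk
  have h3 : π.mesh ≤ δ * k := by
    have := mul_le_mul_of_nonneg_right hkδ hδ.le
    rw [div_mul_eq_mul_div, mul_comm] at this
    calc π.mesh = π.mesh / δ * δ := by field_simp
    _ ≤ (k : ℝ) * δ := mul_le_mul_of_nonneg_right hkδ hδ.le
    _ = δ * k := mul_comm _ _
  rw [div_le_iff₀ hk0]
  linarith

lemma sum_blocks (f : ℕ → ℝ) (n k : ℕ) :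
    ∑ j ∈ Finset.range (n * k), f j
      = ∑ q ∈ Finset.range n, ∑ r ∈ Finset.range k, f (q * k + r) := by
  induction n with
  | zero => simp
  | succ m ih =>
    rw [Nat.succ_mul, Finset.sum_range_add, ih, Finset.sum_range_succ]

lemma refine_variation (X : ℝ → ℝ) (k : ℕ) (hk : 0 < k) :
    (∑ i ∈ Finset.range π.n, |X (π.pts (i + 1)) - X (π.pts i)|)
      ≤ ∑ j ∈ Finset.range (π.refine k hk).n,
          |X ((π.refine k hk).pts (j + 1)) - X ((π.refine k hk).pts j)| := by
  show _ ≤ ∑ j ∈ Finset.range (π.n * k), |X (π.rpts k (j + 1)) - X (π.rpts k j)|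
  rw [sum_blocks]
  apply Finset.sum_le_sum
  intro q hq
  set g : ℕ → ℝ := fun r => X (π.rpts k (q * k + r)) with hg
  have h0 : g 0 = X (π.pts q) := by simp [hg, π.rpts_block k hk q]
  have hkk : g k = X (π.pts (q + 1)) := by
    have : q * k + k = (q + 1) * k := by ring
    simp [hg, this, π.rpts_block k hk (q + 1)]
  calc |X (π.pts (q + 1)) - X (π.pts q)| = |g k - g 0| := by rw [h0, hkk]
  _ = |∑ r ∈ Finset.range k, (g (r + 1) - g r)| := by rw [Finset.sum_range_sub]
  _ ≤ ∑ r ∈ Finset.range k, |g (r + 1) - g r| := Finset.abs_sum_le_sum_abs _ _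
  _ = ∑ r ∈ Finset.range k, |X (π.rpts k (q * k + r + 1)) - X (π.rpts k (q * k + r))| := rfl

lemma exists_fine_refinement (X : ℝ → ℝ) {δ : ℝ} (hδ : 0 < δ) :
    ∃ π' : RealPartition s t, π'.mesh ≤ δ ∧
      (∑ i ∈ Finset.range π.n, |X (π.pts (i + 1)) - X (π.pts i)|)
        ≤ ∑ j ∈ Finset.range π'.n, |X (π'.pts (j + 1)) - X (π'.pts j)| := by
  set k := ⌈π.mesh / δ⌉₊ with hkdef
  have hk : 0 < k := Nat.ceil_pos.mpr (div_pos π.mesh_pos hδ)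
  exact ⟨π.refine k hk, π.refine_mesh k hk hδ (Nat.le_ceil _),
    π.refine_variation X k hk⟩

end RealPartition



/-- The Riemann-sum functional on `C(Icc 0 T, ℝ)`. -/
noncomputable def lam (T : ℝ) (hT : (0:ℝ) ≤ T) (X : ℝ → ℝ) (π : RealPartition 0 T)
    (G : C(Set.Icc (0:ℝ) T, ℝ)) : ℝ :=
  ∑ i ∈ Finset.range π.n,
    G (Set.projIcc 0 T hT (π.pts i)) * (X (π.pts (i + 1)) - X (π.pts i))

lemma lam_continuous (T : ℝ) (hT : (0:ℝ) ≤ T) (X : ℝ → ℝ) (π : RealPartition 0 T) :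
    Continuous (lam T hT X π) :=
  continuous_finset_sum _ fun i _ =>
    (ContinuousEvalConst.continuous_eval_const _).mul continuous_const

lemma lam_eq_riemannSum (T : ℝ) (hT : (0:ℝ) ≤ T) (X : ℝ → ℝ) (π : RealPartition 0 T)
    (G : C(Set.Icc (0:ℝ) T, ℝ)) :
    lam T hT X π G = riemannSum (fun x => G (Set.projIcc 0 T hT x)) X π := rfl

lemma lam_add_smul (T : ℝ) (hT : (0:ℝ) ≤ T) (X : ℝ → ℝ) (π : RealPartition 0 T)
    (G₀ G : C(Set.Icc (0:ℝ) T, ℝ)) (c : ℝ) :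
    lam T hT X π (G₀ + c • G) = lam T hT X π G₀ + c * lam T hT X π G := by
  unfold lam
  rw [Finset.mul_sum, ← Finset.sum_add_distrib]
  congr 1; funext i
  simp [add_mul, mul_assoc]

/-- The Riemann sum of `G ∘ Subtype.val` against `X` when all values are sampled
in `Icc 0 T` equals `lam` of the restriction. -/
lemma lam_coe (T : ℝ) (hT : (0:ℝ) ≤ T) (X H : ℝ → ℝ) (hH : Continuous H)
    (π : RealPartition 0 T) :
    lam T hT X π ⟨fun x => H x.1, hH.comp continuous_subtype_val⟩
      = riemannSum H X π := by
  unfold lam riemannSum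
  apply Finset.sum_congr rfl
  intro i hi
  have hmem := π.pts_mem (Nat.le_of_lt (Finset.mem_range.mp hi))
  rw [Set.projIcc_of_mem hT hmem]
  rfl

/-- A continuous function, bounded by 1, taking prescribed `±1` values at the
partition points. -/
lemma exists_sign_integrand (T : ℝ) (X : ℝ → ℝ) (π : RealPartition (0:ℝ) T) :
    ∃ H : ℝ → ℝ, Continuous H ∧ (∀ x, |H x| ≤ 1) ∧
      riemannSum H X π
        = ∑ i ∈ Finset.range π.n, |X (π.pts (i + 1)) - X (π.pts i)| := by
  classical
  have hne : (Finset.range π.n).Nonempty := Finset.nonempty_range_iff.mpr π.npos.ne'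
  set δ : ℝ := ((Finset.range π.n).inf' hne fun i => π.pts (i + 1) - π.pts i) / 2 with hδdef
  have hδ : 0 < δ := by
    have : 0 < (Finset.range π.n).inf' hne fun i => π.pts (i + 1) - π.pts i := by
      rw [Finset.lt_inf'_iff]
      intro i hi
      exact sub_pos.mpr (π.strict i (Finset.mem_range.mp hi))
    positivity
  have hsep : ∀ i j, i ≤ π.n → j ≤ π.n → i ≠ j → 2 * δ ≤ |π.pts i - π.pts j| := by
    have key : ∀ i j, i < j → j ≤ π.n → 2 * δ ≤ π.pts j - π.pts i := by
      intro i j hij hj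
      have h1 : (Finset.range π.n).inf' hne (fun i => π.pts (i + 1) - π.pts i)
          ≤ π.pts (i + 1) - π.pts i :=
        Finset.inf'_le _ (Finset.mem_range.mpr (lt_of_lt_of_le hij hj))
      have h2 : π.pts (i + 1) ≤ π.pts j := π.pts_le_pts hij hj
      rw [hδdef]; linarith
    intro i j hi hj hij
    rcases lt_or_gt_of_ne hij with h | h
    · rw [abs_sub_comm, abs_of_nonneg (by linarith [key i j h hj])]
      exact key i j h hj
    · rw [abs_of_nonneg (by linarith [key j i h hi])]
      exact key j i h hi
  set sgn : ℕ → ℝ := fun i => if 0 ≤ X (π.pts (i + 1)) - X (π.pts i) then 1 else -1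
    with hsgn
  have hsgn1 : ∀ i, |sgn i| ≤ 1 := by
    intro i; rw [hsgn]; dsimp only; split <;> simp
  set hat : ℕ → ℝ → ℝ := fun i x => max 0 (1 - |x - π.pts i| / δ) with hhat
  have hat_cont : ∀ i, Continuous (hat i) := by
    intro i; rw [hhat]; fun_prop
  have hat_le_one : ∀ i x, hat i x ≤ 1 := by
    intro i x; rw [hhat]; dsimp only
    apply max_le zero_le_one
    have : 0 ≤ |x - π.pts i| / δ := by positivity
    linarith
  have hat_nonneg : ∀ i x, 0 ≤ hat i x := fun i x => le_max_left _ _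
  have hat_zero : ∀ i x, δ ≤ |x - π.pts i| → hat i x = 0 := by
    intro i x hx
    rw [hhat]; dsimp only
    apply max_eq_left
    rw [sub_nonpos, le_div_iff₀ hδ, one_mul]
    exact hx
  have hat_self : ∀ i, hat i (π.pts i) = 1 := by
    intro i; rw [hhat]; simp [hδ.le]
  set H : ℝ → ℝ := fun x => ∑ i ∈ Finset.range (π.n + 1), sgn i * hat i x with hH
  have Hcont : Continuous H := by
    rw [hH]; exact continuous_finset_sum _ fun i _ => continuous_const.mul (hat_cont i)
  have Hnode : ∀ j, j ≤ π.n → H (π.pts j) = sgn j := by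
    intro j hj
    rw [hH]; dsimp only
    rw [Finset.sum_eq_single_of_mem j (Finset.mem_range.mpr (by omega))]
    · rw [hat_self j, mul_one]
    · intro i hi hij
      have hi' : i ≤ π.n := Nat.lt_succ_iff.mp (Finset.mem_range.mp hi)
      have hs := hsep j i hj hi' (Ne.symm hij)
      rw [hat_zero i _ (by linarith), mul_zero]
  have Hbdd : ∀ x, |H x| ≤ 1 := by
    intro x
    by_cases hx : ∃ j ∈ Finset.range (π.n + 1), |x - π.pts j| < δ
    · obtain ⟨j, hjmem, hxj⟩ := hx
      have : H x = sgn j * hat j x := by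
        rw [hH]; dsimp only
        apply Finset.sum_eq_single_of_mem j hjmem
        intro i hi hij
        have hi' : i ≤ π.n := Nat.lt_succ_iff.mp (Finset.mem_range.mp hi)
        have hj' : j ≤ π.n := Nat.lt_succ_iff.mp (Finset.mem_range.mp hjmem)
        have hs := hsep i j hi' hj' hij
        have hfar : δ ≤ |x - π.pts i| := by
          have h1 : |π.pts i - π.pts j| ≤ |x - π.pts i| + |x - π.pts j| := by
            have h2 : π.pts i - π.pts j = (π.pts i - x) + (x - π.pts j) := by ring
            rw [h2]
            calc |(π.pts i - x) + (x - π.pts j)|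
                ≤ |π.pts i - x| + |x - π.pts j| := abs_add_le _ _
            _ = |x - π.pts i| + |x - π.pts j| := by rw [abs_sub_comm]
          linarith
        rw [hat_zero i x hfar, mul_zero]
      rw [this, abs_mul]
      calc |sgn j| * |hat j x| ≤ 1 * 1 := by
            apply mul_le_mul (hsgn1 j) _ (abs_nonneg _) zero_le_one
            rw [abs_of_nonneg (hat_nonneg j x)]
            exact hat_le_one j x
      _ = 1 := mul_one 1
    · push_neg at hx
      have : H x = 0 := by
        rw [hH]; dsimp only
        apply Finset.sum_eq_zero
        intro i hi
        rw [hat_zero i x (hx i hi), mul_zero]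
      rw [this]; simp
  refine ⟨H, Hcont, Hbdd, ?_⟩
  unfold riemannSum
  apply Finset.sum_congr rfl
  intro i hi
  rw [Hnode i (Finset.mem_range.mp hi).le]
  rw [hsgn]; dsimp only
  by_cases h : 0 ≤ X (π.pts (i + 1)) - X (π.pts i)
  · rw [if_pos h, one_mul, abs_of_nonneg h]
  · rw [if_neg h, neg_one_mul, abs_of_neg (not_le.mp h)]

-- main theorem body only (appended to prelude pieces)

/-- (Cf. Revuz–Yor, Ch. IV, Ex. (2.21).)  If for every continuous integrand `H` the
Riemann sums of `H` against `X` converge along every sequence of partitions of `[0,T]`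
with vanishing meshsize, then the limit does not depend on the sequence of partitions,
and `X` is of bounded variation on `[0,T]`. -/
theorem bounded_variation_of_riemann_convergence (T : ℝ) (hT : 0 < T) (X : ℝ → ℝ)
    (hconv : ∀ H : ℝ → ℝ, ContinuousOn H (Set.Icc 0 T) →
      ∀ π : ℕ → RealPartition (0 : ℝ) T,
        Filter.Tendsto (fun n => (π n).mesh) Filter.atTop (nhds 0) →
        ∃ L, Filter.Tendsto (fun n => riemannSum H X (π n)) Filter.atTop (nhds L)) :
    (∀ H : ℝ → ℝ, ContinuousOn H (Set.Icc 0 T) →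
      ∀ π π' : ℕ → RealPartition (0 : ℝ) T,
        Filter.Tendsto (fun n => (π n).mesh) Filter.atTop (nhds 0) →
        Filter.Tendsto (fun n => (π' n).mesh) Filter.atTop (nhds 0) →
        ∀ L L' : ℝ,
          Filter.Tendsto (fun n => riemannSum H X (π n)) Filter.atTop (nhds L) →
          Filter.Tendsto (fun n => riemannSum H X (π' n)) Filter.atTop (nhds L') →
          L = L')
      ∧ ∃ C : ℝ, ∀ π : RealPartition (0 : ℝ) T,
          (∑ i ∈ Finset.range π.n, |X (π.pts (i + 1)) - X (π.pts i)|) ≤ C := by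
  constructor
  · -- the limit does not depend on the sequence of partitions
    intro H hH π π' hm hm' L L' hL hL'
    set ρ : ℕ → RealPartition (0:ℝ) T := fun n => if n % 2 = 0 then π (n / 2) else π' (n / 2)
      with hρ
    have hρmesh : Filter.Tendsto (fun n => (ρ n).mesh) Filter.atTop (nhds 0) := by
      rw [Metric.tendsto_atTop] at hm hm' ⊢
      intro ε hε
      obtain ⟨N₁, h₁⟩ := hm ε hε
      obtain ⟨N₂, h₂⟩ := hm' ε hε
      refine ⟨2 * N₁ + 2 * N₂ + 2, fun n hn => ?_⟩
      by_cases he : n % 2 = 0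
      · have hn' : ρ n = π (n / 2) := if_pos he
        rw [hn']; exact h₁ _ (by omega)
      · have hn' : ρ n = π' (n / 2) := if_neg he
        rw [hn']; exact h₂ _ (by omega)
    obtain ⟨M, hM⟩ := hconv H hH ρ hρmesh
    have htwo : Filter.Tendsto (fun n : ℕ => 2 * n) Filter.atTop Filter.atTop :=
      Filter.tendsto_atTop_mono (fun n => by simp only [id_eq]; omega) Filter.tendsto_id
    have htwo1 : Filter.Tendsto (fun n : ℕ => 2 * n + 1) Filter.atTop Filter.atTop :=
      Filter.tendsto_atTop_mono (fun n => by simp only [id_eq]; omega) Filter.tendsto_id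
    have heven : ∀ n : ℕ, ρ (2 * n) = π n := by
      intro n
      have h1 : (2 * n) % 2 = 0 := by omega
      have h2 : (2 * n) / 2 = n := by omega
      rw [hρ]; dsimp only; rw [if_pos h1, h2]
    have hodd : ∀ n : ℕ, ρ (2 * n + 1) = π' n := by
      intro n
      have h1 : ¬ (2 * n + 1) % 2 = 0 := by omega
      have h2 : (2 * n + 1) / 2 = n := by omega
      rw [hρ]; dsimp only; rw [if_neg h1, h2]
    have hLM : L = M := by
      have hc := hM.comp htwo
      simp only [Function.comp_def] at hc
      have : (fun n => riemannSum H X (ρ (2 * n))) = fun n => riemannSum H X (π n) :=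
        funext fun n => by rw [heven n]
      rw [this] at hc
      exact tendsto_nhds_unique hL hc
    have hLM' : L' = M := by
      have hc := hM.comp htwo1
      simp only [Function.comp_def] at hc
      have : (fun n => riemannSum H X (ρ (2 * n + 1))) = fun n => riemannSum H X (π' n) :=
        funext fun n => by rw [hodd n]
      rw [this] at hc
      exact tendsto_nhds_unique hL' hc
    rw [hLM, hLM']
  · -- bounded variation
    classical
    set Λ := lam T hT.le X with hΛ
    set E : ℕ → Set C(Set.Icc (0:ℝ) T, ℝ) :=
      fun N => {G | ∀ σ : RealPartition (0:ℝ) T, σ.mesh ≤ 1 / (N + 1) → |Λ σ G| ≤ N} with hE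
    have hclosed : ∀ N, IsClosed (E N) := by
      intro N
      have hrw : E N = ⋂ (σ : RealPartition (0:ℝ) T) (_ : σ.mesh ≤ 1 / (N + 1)),
          {G | |Λ σ G| ≤ (N : ℝ)} := by
        ext G
        simp only [hE, Set.mem_setOf_eq, Set.mem_iInter]
      rw [hrw]
      exact isClosed_iInter fun σ => isClosed_iInter fun _ =>
        isClosed_le (lam_continuous T hT.le X σ).abs continuous_const
    have hcover : ⋃ N, E N = Set.univ := by
      rw [Set.eq_univ_iff_forall]
      intro G
      rw [Set.mem_iUnion]
      by_contra hG
      push_neg at hG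
      have hG' : ∀ N : ℕ, ∃ σ : RealPartition (0:ℝ) T,
          σ.mesh ≤ 1 / (N + 1) ∧ (N : ℝ) < |Λ σ G| := by
        intro N
        have h := hG N
        rw [hE] at h
        simp only [Set.mem_setOf_eq, not_forall] at h
        obtain ⟨σ, h1, h2⟩ := h
        exact ⟨σ, h1, lt_of_not_ge h2⟩
      choose σ h1 h2 using hG'
      have hmesh0 : Filter.Tendsto (fun N => (σ N).mesh) Filter.atTop (nhds 0) :=
        squeeze_zero (fun N => (σ N).mesh_pos.le) h1
          tendsto_one_div_add_atTop_nhds_zero_nat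
      obtain ⟨L, hL⟩ := hconv (fun x => G (Set.projIcc 0 T hT.le x))
        (((map_continuous G).comp continuous_projIcc).continuousOn) σ hmesh0
      have hLam : ∀ N, riemannSum (fun x => G (Set.projIcc 0 T hT.le x)) X (σ N)
          = Λ (σ N) G := fun N => (lam_eq_riemannSum T hT.le X (σ N) G).symm
      rw [Metric.tendsto_atTop] at hL
      obtain ⟨N₀, hN₀⟩ := hL 1 one_pos
      set N := max N₀ (⌈|L|⌉₊ + 1) with hN
      have hb := hN₀ N (le_max_left _ _)
      rw [Real.dist_eq, hLam N] at hb
      have habs : |Λ (σ N) G| ≤ |L| + 1 := by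
        have h3 := abs_sub_abs_le_abs_sub (Λ (σ N) G) L
        linarith [abs_nonneg (Λ (σ N) G - L)]
      have hceil := Nat.le_ceil |L|
      have hNL : ((⌈|L|⌉₊ : ℕ) : ℝ) + 1 ≤ (N : ℝ) := by
        have : (⌈|L|⌉₊ + 1 : ℕ) ≤ N := le_max_right _ _
        exact_mod_cast this
      have hlt := h2 N
      linarith
    obtain ⟨N, hNne⟩ := nonempty_interior_of_iUnion_of_closed hclosed hcover
    obtain ⟨G₀, hG₀⟩ := hNne
    obtain ⟨ε, hε, hball⟩ := Metric.isOpen_iff.mp isOpen_interior G₀ hG₀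
    have hball' : Metric.ball G₀ ε ⊆ E N := hball.trans interior_subset
    have hG₀E : G₀ ∈ E N := interior_subset hG₀
    have hεne : ε ≠ 0 := hε.ne'
    have key : ∀ σ : RealPartition (0:ℝ) T, σ.mesh ≤ 1 / (N + 1) →
        ∀ G : C(Set.Icc (0:ℝ) T, ℝ), (∀ x, |G x| ≤ 1) → |Λ σ G| ≤ 4 * N / ε := by
      intro σ hσ G hGb
      have hGnorm : ‖G‖ ≤ 1 := (ContinuousMap.norm_le G zero_le_one).mpr
        (fun x => by rw [Real.norm_eq_abs]; exact hGb x)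
      have hmem : G₀ + (ε / 2) • G ∈ Metric.ball G₀ ε := by
        rw [Metric.mem_ball, dist_eq_norm, add_sub_cancel_left]
        have hns : ‖(ε / 2) • G‖ = ‖ε / 2‖ * ‖G‖ := norm_smul (ε / 2) G
        rw [hns, Real.norm_eq_abs, abs_of_pos (by linarith : (0:ℝ) < ε / 2)]
        calc ε / 2 * ‖G‖ ≤ ε / 2 * 1 :=
              mul_le_mul_of_nonneg_left hGnorm (by linarith)
        _ < ε := by linarith
      have h1 : |Λ σ (G₀ + (ε / 2) • G)| ≤ N := hball' hmem σ hσ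
      have h0 : |Λ σ G₀| ≤ N := hG₀E σ hσ
      have hlin : Λ σ (G₀ + (ε / 2) • G) = Λ σ G₀ + (ε / 2) * Λ σ G :=
        lam_add_smul T hT.le X σ G₀ G (ε / 2)
      have h2 : |(ε / 2) * Λ σ G| ≤ 2 * N := by
        calc |(ε / 2) * Λ σ G| = |Λ σ (G₀ + (ε / 2) • G) - Λ σ G₀| := by
              rw [hlin]; ring_nf
        _ ≤ |Λ σ (G₀ + (ε / 2) • G)| + |Λ σ G₀| := abs_sub _ _
        _ ≤ 2 * N := by linarith
      rw [abs_mul, abs_of_pos (by linarith : (0:ℝ) < ε / 2)] at h2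
      have hrw : 4 * (N : ℝ) / ε = 2 * N / (ε / 2) := by
        field_simp
        ring
      rw [hrw]
      rw [le_div_iff₀ (by linarith : (0:ℝ) < ε / 2)]
      linarith
    have fine : ∀ σ : RealPartition (0:ℝ) T, σ.mesh ≤ 1 / (N + 1) →
        (∑ i ∈ Finset.range σ.n, |X (σ.pts (i + 1)) - X (σ.pts i)|) ≤ 4 * N / ε := by
      intro σ hσ
      obtain ⟨H, Hc, Hb, Hsum⟩ := exists_sign_integrand T X σ
      have hk := key σ hσ ⟨fun x => H x.1, Hc.comp continuous_subtype_val⟩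
        (fun x => Hb x.1)
      rw [hΛ, lam_coe T hT.le X H Hc σ, Hsum] at hk
      exact le_trans (le_abs_self _) hk
    refine ⟨4 * N / ε, fun σ => ?_⟩
    obtain ⟨σ', hσ'mesh, hσ'var⟩ := σ.exists_fine_refinement X
      (show (0:ℝ) < 1 / (N + 1) by positivity)
    exact hσ'var.trans (fine σ' hσ'mesh)
end
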